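/- Let Δ be a root system in a finite-dimensional real inner product space E, with Weyl group W, and let H be a finite group of linear automorphisms of E which preserve Δ and which map a fixed Weyl chamber C⁺_ℝ ⊂ E to itself. Let C = ℂ ⊗_ℝ E be the complexification, with the ℂ-linear extensions of the actions of W and H. Then every H-fixed point of the orbit space C/W lifts to an H-fixed vector: for every v ∈ C whose W-orbit is H-stable (i.e., for each h ∈ H there exists w ∈ W with h·v = w·v), there exists w₀ ∈ W such that w₀·v is fixed by every element of H. Equivalently, the natural map C^H → (C/W)_H from H-fixed vectors to H-fixed W-orbits is surjective (and, since W-orbits are finite, has finite fibers). -/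

import Mathlib

open scoped TensorProduct RealInnerProductSpace

/-- Context: a finite "root system" `Δ` with a positive definite symmetric bilinear
form `B`, reflections `refl`, in a real vector space. -/
structure RC (E : Type*) [AddCommGroup E] [Module ℝ E] where
  B : E →ₗ[ℝ] E →ₗ[ℝ] ℝ
  Bsymm : ∀ x y : E, B x y = B y x
  Bpos : ∀ x : E, x ≠ 0 → 0 < B x x
  Δ : Set E
  hfin : Δ.Finite
  hspan : Submodule.span ℝ Δ = ⊤
  hzero : (0 : E) ∉ Δ
  refl : E → E ≃ₗ[ℝ] E
  hrefl : ∀ α ∈ Δ, ∀ x : E, refl α x = x - (2 * B α x / B α α) • α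
  hreflΔ : ∀ α ∈ Δ, ∀ β ∈ Δ, refl α β ∈ Δ

namespace RC

variable {E : Type*} [AddCommGroup E] [Module ℝ E] (c : RC E)

lemma Bne (α : E) (hα : α ∈ c.Δ) : c.B α α ≠ 0 :=
  ne_of_gt (c.Bpos α (fun h => c.hzero (h ▸ hα)))

lemma ane (α : E) (hα : α ∈ c.Δ) : α ≠ 0 := fun h => c.hzero (h ▸ hα)

lemma refl_apply_self (α : E) (hα : α ∈ c.Δ) : c.refl α α = -α := by
  rw [c.hrefl α hα α, mul_div_assoc, div_self (c.Bne α hα)]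
  module

lemma refl_apply_of_B_eq_zero (α : E) (hα : α ∈ c.Δ) (x : E) (h : c.B α x = 0) :
    c.refl α x = x := by
  rw [c.hrefl α hα x, h]
  simp

lemma refl_refl (α : E) (hα : α ∈ c.Δ) (x : E) : c.refl α (c.refl α x) = x := by
  rw [c.hrefl α hα x, c.hrefl α hα _]
  have h1 : c.B α (x - (2 * c.B α x / c.B α α) • α) = - c.B α x := by
    have := c.Bne α hα
    simp only [map_sub, map_smul, smul_eq_mul]
    field_simp
    ring
  rw [h1]
  have := c.Bne α hα
  match_scalars <;> field_simp <;> ring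

lemma refl_mul_refl (α : E) (hα : α ∈ c.Δ) : c.refl α * c.refl α = 1 := by
  ext x
  exact c.refl_refl α hα x

lemma refl_inv (α : E) (hα : α ∈ c.Δ) : (c.refl α)⁻¹ = c.refl α := by
  rw [inv_eq_iff_mul_eq_one, c.refl_mul_refl α hα]

lemma B_refl (α : E) (hα : α ∈ c.Δ) (x y : E) :
    c.B (c.refl α x) (c.refl α y) = c.B x y := by
  rw [c.hrefl α hα x, c.hrefl α hα y]
  have hxα : c.B x α = c.B α x := c.Bsymm x α
  have hyα : c.B y α = c.B α y := c.Bsymm y α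
  have := c.Bne α hα
  simp only [map_sub, map_smul, smul_eq_mul, LinearMap.sub_apply, LinearMap.smul_apply]
  rw [hxα]
  field_simp
  ring

/-- The subgroup of linear automorphisms mapping `Δ` onto itself. -/
def stabΔ : Subgroup (E ≃ₗ[ℝ] E) where
  carrier := {g | g '' c.Δ = c.Δ}
  one_mem' := by simp
  mul_mem' := by
    intro a b ha hb
    simp only [Set.mem_setOf_eq] at *
    have hc : ⇑(a * b) = ⇑a ∘ ⇑b := rfl
    rw [hc, Set.image_comp, hb, ha]
  inv_mem' := by
    intro a ha
    simp only [Set.mem_setOf_eq] at *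
    conv_lhs => rw [← ha]
    rw [← Set.image_comp]
    have hc : ⇑a⁻¹ ∘ ⇑a = id := funext fun x => a.symm_apply_apply x
    rw [hc, Set.image_id]

lemma mem_stabΔ_iff (g : E ≃ₗ[ℝ] E) : g ∈ c.stabΔ ↔ g '' c.Δ = c.Δ := Iff.rfl

lemma maps_of_stab {g : E ≃ₗ[ℝ] E} (hg : g ∈ c.stabΔ) {α : E} (hα : α ∈ c.Δ) :
    g α ∈ c.Δ := by
  rw [mem_stabΔ_iff] at hg
  rw [← hg]
  exact ⟨α, hα, rfl⟩

lemma refl_mem_stabΔ (α : E) (hα : α ∈ c.Δ) : c.refl α ∈ c.stabΔ := by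
  rw [mem_stabΔ_iff]
  apply Set.Subset.antisymm
  · rintro x ⟨y, hy, rfl⟩; exact c.hreflΔ α hα y hy
  · intro β hβ
    exact ⟨c.refl α β, c.hreflΔ α hα β hβ, c.refl_refl α hα β⟩

/-- Two linear equivs agreeing on `Δ` are equal. -/
lemma ext_on_Δ {g₁ g₂ : E ≃ₗ[ℝ] E} (h : ∀ α ∈ c.Δ, g₁ α = g₂ α) : g₁ = g₂ := by
  have : (g₁ : E →ₗ[ℝ] E) = (g₂ : E →ₗ[ℝ] E) := LinearMap.ext_on c.hspan h
  ext x
  exact LinearMap.congr_fun this x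

end RC

namespace RC

variable {E : Type*} [AddCommGroup E] [Module ℝ E] (c : RC E)

instance finite_stabΔ : Finite c.stabΔ := by
  have : Finite c.Δ := c.hfin.to_subtype
  have : Finite (c.Δ → c.Δ) := by infer_instance
  apply Finite.of_injective (f := fun (g : c.stabΔ) (a : c.Δ) =>
    (⟨(g : E ≃ₗ[ℝ] E) a, c.maps_of_stab g.2 a.2⟩ : c.Δ))
  intro g₁ g₂ hg
  have : ∀ α ∈ c.Δ, (g₁ : E ≃ₗ[ℝ] E) α = (g₂ : E ≃ₗ[ℝ] E) α := by
    intro α hα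
    have := congr_fun hg ⟨α, hα⟩
    exact congr_arg Subtype.val this
  exact Subtype.ext (c.ext_on_Δ this)

/-- Unipotent trick: a `Δ`-preserving map of the form `x ↦ x + φ(x) • v` with
`φ(v) = 0` is the identity. -/
lemma unipotent_eq_one {g : E ≃ₗ[ℝ] E} (hg : g ∈ c.stabΔ) {v : E} (hv : v ≠ 0)
    {φ : E →ₗ[ℝ] ℝ} (hφv : φ v = 0) (hgx : ∀ x, g x = x + φ x • v) : g = 1 := by
  have key : ∀ n : ℕ, ∀ x, (g ^ n) x = x + (n : ℝ) • φ x • v := by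
    intro n
    induction n with
    | zero => intro x; simp
    | succ n ih =>
      intro x
      have : g ^ (n + 1) = g * g ^ n := by rw [pow_succ']
      rw [this]
      have h1 : (g * g ^ n) x = g ((g ^ n) x) := rfl
      rw [h1, ih x, hgx]
      have h2 : φ (x + (n : ℝ) • φ x • v) = φ x := by
        simp [hφv]
      rw [h2]
      push_cast
      module
  -- g has finite order since it lies in the finite group stabΔ
  have hfin : IsOfFinOrder (⟨g, hg⟩ : c.stabΔ) := isOfFinOrder_of_finite _
  obtain ⟨n, hn, hgn⟩ := hfin.exists_pow_eq_one
  have hgn' : g ^ n = 1 := by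
    have h := congr_arg Subtype.val hgn
    simpa using h
  have hφ : ∀ x, φ x = 0 := by
    intro x
    have := key n x
    rw [hgn'] at this
    rw [show (1 : E ≃ₗ[ℝ] E) x = x from rfl] at this
    have h0 : (n : ℝ) • φ x • v = 0 := by linear_combination (norm := module) this.symm
    rcases smul_eq_zero.1 h0 with h | h
    · exact absurd (Nat.cast_eq_zero.1 h) (by omega)
    · rcases smul_eq_zero.1 h with h | h
      · exact h
      · exact absurd h hv
  ext x
  rw [hgx x, hφ x]
  simp

/-- Key conjugation lemma: a `Δ`-preserving automorphism conjugates root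
reflections to root reflections. -/
lemma conj_refl {g : E ≃ₗ[ℝ] E} (hg : g ∈ c.stabΔ) {α : E} (hα : α ∈ c.Δ) :
    g * c.refl α * g⁻¹ = c.refl (g α) := by
  have hgα : g α ∈ c.Δ := c.maps_of_stab hg hα
  have hgα0 : g α ≠ 0 := c.ane _ hgα
  set t : E ≃ₗ[ℝ] E := g * c.refl α * g⁻¹ with ht
  -- φ = t * refl (g α) is unipotent
  set u : E ≃ₗ[ℝ] E := c.refl (g α) with hu
  have htx : ∀ z : E, t z = z - (2 * c.B α (g⁻¹ z) / c.B α α) • (g α) := by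
    intro z
    have : t z = g (c.refl α (g⁻¹ z)) := rfl
    rw [this, c.hrefl α hα (g⁻¹ z)]
    rw [map_sub, map_smul]
    have : g (g⁻¹ z) = z := g.apply_symm_apply z
    rw [this]
  have hux : ∀ z : E, u z = z - (2 * c.B (g α) z / c.B (g α) (g α)) • (g α) :=
    c.hrefl (g α) hgα
  -- linear functional
  set φ : E →ₗ[ℝ] ℝ :=
    (2 / c.B (g α) (g α)) • (c.B (g α)) - (2 / c.B α α) • ((c.B α).comp (g⁻¹ : E ≃ₗ[ℝ] E).toLinearMap)
    with hφ
  have hφx : ∀ x, φ x = 2 * c.B (g α) x / c.B (g α) (g α) - 2 * c.B α (g⁻¹ x) / c.B α α := by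
    intro x
    simp only [hφ, LinearMap.sub_apply, LinearMap.smul_apply, LinearMap.comp_apply,
      LinearEquiv.coe_coe, smul_eq_mul]
    ring
  have hcomp : ∀ x, (t * u) x = x + φ x • (g α) := by
    intro x
    have h1 : (t * u) x = t (u x) := rfl
    rw [h1, hux x, htx _]
    have h2 : c.B α (g⁻¹ (x - (2 * c.B (g α) x / c.B (g α) (g α)) • g α)) =
        c.B α (g⁻¹ x) - (2 * c.B (g α) x / c.B (g α) (g α)) * c.B α α := by
      rw [map_sub, map_smul, map_sub, map_smul]
      have : g⁻¹ (g α) = α := g.symm_apply_apply α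
      rw [this]
      simp [smul_eq_mul]
    rw [h2, hφx x]
    have hBαα := c.Bne α hα
    match_scalars
    · field_simp
    · field_simp; ring
  have hφv : φ (g α) = 0 := by
    rw [hφx]
    have : g⁻¹ (g α) = α := g.symm_apply_apply α
    rw [this]
    have h1 := c.Bne α hα
    have h2 := c.Bne _ hgα
    field_simp
    ring
  have htu : t * u ∈ c.stabΔ := by
    apply Subgroup.mul_mem
    · exact Subgroup.mul_mem _ (Subgroup.mul_mem _ hg (c.refl_mem_stabΔ α hα)) (Subgroup.inv_mem _ hg)
    · exact c.refl_mem_stabΔ _ hgα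
  have : t * u = 1 := c.unipotent_eq_one htu hgα0 hφv hcomp
  have h3 : t = u⁻¹ := eq_inv_of_mul_eq_one_left this
  rw [c.refl_inv _ hgα] at h3
  exact h3

end RC

namespace RC

variable {E : Type*} [AddCommGroup E] [Module ℝ E] (c : RC E)

/-- The Weyl group. -/
def W : Subgroup (E ≃ₗ[ℝ] E) := Subgroup.closure {w : E ≃ₗ[ℝ] E | ∃ α ∈ c.Δ, w = c.refl α}

lemma refl_mem_W {α : E} (hα : α ∈ c.Δ) : c.refl α ∈ c.W :=
  Subgroup.subset_closure ⟨α, hα, rfl⟩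

lemma W_le_stabΔ : c.W ≤ c.stabΔ := by
  apply Subgroup.closure_le _ |>.2
  rintro w ⟨α, hα, rfl⟩
  exact c.refl_mem_stabΔ α hα

lemma W_maps {w : E ≃ₗ[ℝ] E} (hw : w ∈ c.W) {α : E} (hα : α ∈ c.Δ) : w α ∈ c.Δ :=
  c.maps_of_stab (c.W_le_stabΔ hw) hα

instance finite_W : Finite c.W :=
  Finite.of_injective (fun w : c.W => (⟨w.1, c.W_le_stabΔ w.2⟩ : c.stabΔ))
    (by intro a b hab; apply Subtype.ext; have := congrArg Subtype.val hab; exact this)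

lemma B_W {w : E ≃ₗ[ℝ] E} (hw : w ∈ c.W) (x y : E) : c.B (w x) (w y) = c.B x y := by
  induction hw using Subgroup.closure_induction generalizing x y with
  | mem w hw => obtain ⟨α, hα, rfl⟩ := hw; exact c.B_refl α hα x y
  | one => rfl
  | mul a b _ _ ha hb =>
    have : (a * b) x = a (b x) := rfl
    rw [this, show (a * b) y = a (b y) from rfl, ha, hb]
  | inv a _ ha =>
    have e : ∀ z : E, a (a⁻¹ z) = z := fun z => a.apply_symm_apply z
    have h1 := ha (a⁻¹ x) (a⁻¹ y)
    rw [e, e] at h1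
    exact h1.symm

lemma conj_mem_W {g : E ≃ₗ[ℝ] E} (hg : g ∈ c.stabΔ) {w : E ≃ₗ[ℝ] E} (hw : w ∈ c.W) :
    g * w * g⁻¹ ∈ c.W := by
  induction hw using Subgroup.closure_induction with
  | mem w hw =>
    obtain ⟨α, hα, rfl⟩ := hw
    rw [c.conj_refl hg hα]
    exact c.refl_mem_W (c.maps_of_stab hg hα)
  | one => simpa using Subgroup.one_mem _
  | mul a b _ _ ha hb =>
    have : g * (a * b) * g⁻¹ = (g * a * g⁻¹) * (g * b * g⁻¹) := by group
    rw [this]; exact Subgroup.mul_mem _ ha hb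
  | inv a _ ha =>
    have : g * a⁻¹ * g⁻¹ = (g * a * g⁻¹)⁻¹ := by group
    rw [this]; exact Subgroup.inv_mem _ ha

lemma neg_mem_Δ {α : E} (hα : α ∈ c.Δ) : -α ∈ c.Δ := by
  have := c.hreflΔ α hα α hα
  rwa [c.refl_apply_self α hα] at this

variable (ρ : E)

/-- Positive roots w.r.t. a regular element `ρ`. -/
def Pos : Set E := {α ∈ c.Δ | 0 < c.B α ρ}

lemma Pos_finite : (c.Pos ρ).Finite := c.hfin.subset (fun _ h => h.1)

/-- Positive roots as a finset. -/
noncomputable def PosF : Finset E := (c.Pos_finite ρ).toFinset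

lemma mem_PosF {α : E} : α ∈ c.PosF ρ ↔ α ∈ c.Pos ρ := Set.Finite.mem_toFinset _

lemma pos_or_neg (hρ : ∀ α ∈ c.Δ, c.B α ρ ≠ 0) {α : E} (hα : α ∈ c.Δ) :
    α ∈ c.Pos ρ ∨ -α ∈ c.Pos ρ := by
  rcases lt_or_gt_of_ne (hρ α hα) with h | h
  · right
    exact ⟨c.neg_mem_Δ hα, by simpa using h⟩
  · left
    exact ⟨hα, h⟩

end RC

/-- The cone of nonnegative combinations of a finset. -/
def coneOf {E : Type*} [AddCommGroup E] [Module ℝ E] (T : Finset E) : Set E :=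
  {x | ∃ f : E → ℝ, (∀ a, 0 ≤ f a) ∧ x = ∑ a ∈ T, f a • a}

section Cone

variable {E : Type*} [AddCommGroup E] [Module ℝ E] [DecidableEq E]

lemma mem_cone_self {T : Finset E} {a : E} (ha : a ∈ T) : a ∈ coneOf T := by
  refine ⟨fun x => if x = a then 1 else 0, fun x => by by_cases h : x = a <;> simp [h], ?_⟩
  rw [Finset.sum_eq_single a]
  · simp
  · intro b _ hb; simp [hb]
  · intro h; exact absurd ha h

lemma cone_subst {T : Finset E} {b : E} (hb : b ∈ T) (hbc : b ∈ coneOf (T.erase b)) :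
    ∀ x ∈ coneOf T, x ∈ coneOf (T.erase b) := by
  obtain ⟨g, hg, hgb⟩ := hbc
  rintro x ⟨f, hf, rfl⟩
  refine ⟨fun a => f a + f b * g a,
    fun a => add_nonneg (hf a) (mul_nonneg (hf b) (hg a)), ?_⟩
  have key : ∀ t : ℝ, t • b = ∑ a ∈ T.erase b, (t * g a) • a := by
    intro t
    conv_lhs => rw [hgb]
    rw [Finset.smul_sum]
    simp_rw [smul_smul]
  rw [← Finset.sum_erase_add _ _ hb, key (f b), ← Finset.sum_add_distrib]
  apply Finset.sum_congr rfl
  intro a _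
  rw [add_smul]

end Cone

/-- A simple system for the positive roots. -/
structure SS {E : Type*} [AddCommGroup E] [Module ℝ E] [DecidableEq E] (c : RC E) (ρ : E) where
  S : Finset E
  sub : (S : Set E) ⊆ c.Pos ρ
  gen : ∀ β ∈ c.Pos ρ, β ∈ coneOf S
  min : ∀ a ∈ S, ¬ (∀ β ∈ c.Pos ρ, β ∈ coneOf (S.erase a))

namespace RC

variable {E : Type*} [AddCommGroup E] [Module ℝ E] [DecidableEq E] (c : RC E) (ρ : E)

lemma exists_SS : Nonempty (SS c ρ) := by
  have hex : ∃ n : ℕ, ∃ T : Finset E, ((T : Set E) ⊆ c.Pos ρ ∧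
      ∀ β ∈ c.Pos ρ, β ∈ coneOf T) ∧ T.card = n := by
    refine ⟨(c.PosF ρ).card, c.PosF ρ, ⟨?_, ?_⟩, rfl⟩
    · intro a ha; exact (c.mem_PosF ρ).1 ha
    · intro β hβ; exact mem_cone_self ((c.mem_PosF ρ).2 hβ)
  classical
  obtain ⟨T, hT, hTcard⟩ := Nat.find_spec hex
  refine ⟨⟨T, hT.1, hT.2, ?_⟩⟩
  intro a ha hcon
  have hlt : (T.erase a).card < Nat.find hex := by
    rw [← hTcard]
    exact Finset.card_erase_lt_of_mem ha
  exact Nat.find_min hex hlt ⟨T.erase a,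
    ⟨fun x hx => hT.1 (Finset.erase_subset _ _ hx), hcon⟩, rfl⟩

end RC

namespace RC

variable {E : Type*} [AddCommGroup E] [Module ℝ E] (c : RC E)

lemma B_apply_sum (x : E) (T : Finset E) (f : E → ℝ) :
    c.B x (∑ a ∈ T, f a • a) = ∑ a ∈ T, f a * c.B x a := by
  simp [map_sum, map_smul, smul_eq_mul]

lemma B_sum_apply (T : Finset E) (f : E → ℝ) (y : E) :
    c.B (∑ a ∈ T, f a • a) y = ∑ a ∈ T, f a * c.B a y := by
  induction T using Finset.cons_induction with
  | empty => simp
  | cons a T ha ih =>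
    rw [Finset.sum_cons, Finset.sum_cons, map_add, LinearMap.add_apply, ih,
      map_smul, LinearMap.smul_apply, smul_eq_mul]

end RC

namespace SS

variable {E : Type*} [AddCommGroup E] [Module ℝ E] [DecidableEq E] {c : RC E} {ρ : E}
  (d : SS c ρ)

lemma S_pos {a : E} (ha : a ∈ d.S) : a ∈ c.Pos ρ := d.sub ha

lemma S_Δ {a : E} (ha : a ∈ d.S) : a ∈ c.Δ := (d.sub ha).1

lemma S_Bρ {a : E} (ha : a ∈ d.S) : 0 < c.B a ρ := (d.sub ha).2

lemma not_min_violation {b : E} (hb : b ∈ d.S) (hbc : b ∈ coneOf (d.S.erase b)) : False := by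
  apply d.min b hb
  intro β hβ
  exact cone_subst hb hbc β (d.gen β hβ)

/-- Distinct simple roots make obtuse angles. -/
lemma obtuse (hρ : ∀ α ∈ c.Δ, c.B α ρ ≠ 0) {a b : E} (ha : a ∈ d.S) (hb : b ∈ d.S)
    (hab : a ≠ b) : c.B a b ≤ 0 := by
  by_contra hpos
  push_neg at hpos
  have haΔ : a ∈ c.Δ := d.S_Δ ha
  have hbΔ : b ∈ c.Δ := d.S_Δ hb
  set t : ℝ := 2 * c.B a b / c.B a a with hts
  have ht : 0 < t := by
    apply div_pos (by linarith) (c.Bpos a (c.ane a haΔ))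
  have hσΔ : c.refl a b ∈ c.Δ := c.hreflΔ a haΔ b hbΔ
  have hσ : c.refl a b = b - t • a := c.hrefl a haΔ b
  rcases c.pos_or_neg _ hρ hσΔ with hcase | hcase
  · -- σ = b - t•a positive
    obtain ⟨dd, hdd, hσeq⟩ := d.gen _ hcase
    rw [hσ] at hσeq
    -- b = t•a + ∑ dd x • x
    have hbeq : b = t • a + ∑ x ∈ d.S, dd x • x := by
      rw [← hσeq]; module
    rcases lt_or_ge (dd b) 1 with hlt | hge
    · -- b ∈ cone (S.erase b)
      apply d.not_min_violation hb
      have haeb : a ∈ d.S.erase b := Finset.mem_erase.2 ⟨hab, ha⟩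
      have h1 : (1 - dd b) • b = ∑ x ∈ d.S.erase b, dd x • x + t • a := by
        have h2 : ∑ x ∈ d.S, dd x • x
            = ∑ x ∈ d.S.erase b, dd x • x + dd b • b := by
          rw [Finset.sum_erase_add _ _ hb]
        rw [sub_smul, one_smul]
        nth_rewrite 1 [hbeq]
        rw [h2]
        module
      refine ⟨fun x => (dd x + if x = a then t else 0) / (1 - dd b), ?_, ?_⟩
      · intro x
        apply div_nonneg _ (by linarith)
        have := hdd x
        split <;> linarith
      · have hsum : ∑ x ∈ d.S.erase b, ((dd x + if x = a then t else 0) / (1 - dd b)) • x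
            = (1 - dd b)⁻¹ • ∑ x ∈ d.S.erase b, (dd x + if x = a then t else 0) • x := by
          rw [Finset.smul_sum]
          apply Finset.sum_congr rfl
          intro x _
          rw [smul_smul, div_eq_inv_mul]
        rw [hsum]
        have h3 : ∑ x ∈ d.S.erase b, (dd x + if x = a then t else 0) • x
            = ∑ x ∈ d.S.erase b, dd x • x + t • a := by
          simp_rw [add_smul]
          rw [Finset.sum_add_distrib]
          congr 1
          rw [Finset.sum_eq_single a]
          · simp
          · intro x _ hx; simp [hx]
          · intro h; exact absurd haeb h
        rw [h3, ← h1]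
        rw [smul_smul]
        rw [inv_mul_cancel₀ (by linarith), one_smul]
    · -- 1 ≤ dd b : contradiction via B ρ
      have hBb : c.B ρ b = t * c.B ρ a + ∑ x ∈ d.S, dd x * c.B ρ x := by
        conv_lhs => rw [hbeq]
        rw [map_add, map_smul, c.B_apply_sum]
        simp [smul_eq_mul]
      have hsingle : dd b * c.B ρ b ≤ ∑ x ∈ d.S, dd x * c.B ρ x := by
        apply Finset.single_le_sum (f := fun x => dd x * c.B ρ x) _ hb
        intro x hx
        show 0 ≤ dd x * c.B ρ x
        have h5 : 0 ≤ c.B ρ x := by rw [c.Bsymm]; exact le_of_lt (d.S_Bρ hx)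
        exact mul_nonneg (hdd x) h5
      have hBρb : 0 < c.B ρ b := by rw [c.Bsymm ρ b]; exact d.S_Bρ hb
      have hBρa : 0 < c.B ρ a := by rw [c.Bsymm ρ a]; exact d.S_Bρ ha
      nlinarith
  · -- -σ = t•a - b positive
    have hneg : -(c.refl a b) = t • a - b := by rw [hσ]; abel
    obtain ⟨dd, hdd, hσeq⟩ := d.gen _ hcase
    rw [hneg] at hσeq
    have haeq : t • a = b + ∑ x ∈ d.S, dd x • x := by
      rw [← hσeq]; abel
    rcases lt_or_ge (dd a) t with hlt | hge
    · apply d.not_min_violation ha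
      have hbea : b ∈ d.S.erase a := Finset.mem_erase.2 ⟨hab.symm, hb⟩
      have h1 : (t - dd a) • a = ∑ x ∈ d.S.erase a, dd x • x + b := by
        have h2 : ∑ x ∈ d.S, dd x • x
            = ∑ x ∈ d.S.erase a, dd x • x + dd a • a := by
          rw [Finset.sum_erase_add _ _ ha]
        rw [sub_smul, haeq, h2]
        module
      refine ⟨fun x => (dd x + if x = b then 1 else 0) / (t - dd a), ?_, ?_⟩
      · intro x
        apply div_nonneg _ (by linarith)
        have := hdd x
        split <;> linarith
      · have hsum : ∑ x ∈ d.S.erase a, ((dd x + if x = b then 1 else 0) / (t - dd a)) • x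
            = (t - dd a)⁻¹ • ∑ x ∈ d.S.erase a, (dd x + if x = b then 1 else 0) • x := by
          rw [Finset.smul_sum]
          apply Finset.sum_congr rfl
          intro x _
          rw [smul_smul, div_eq_inv_mul]
        rw [hsum]
        have h3 : ∑ x ∈ d.S.erase a, (dd x + if x = b then 1 else 0) • x
            = ∑ x ∈ d.S.erase a, dd x • x + (1:ℝ) • b := by
          simp_rw [add_smul]
          rw [Finset.sum_add_distrib]
          congr 1
          rw [Finset.sum_eq_single b]
          · simp
          · intro x _ hx; simp [hx]
          · intro h; exact absurd hbea h
        rw [h3, one_smul, ← h1]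
        rw [smul_smul]
        rw [inv_mul_cancel₀ (by linarith), one_smul]
    · have hBb : t * c.B ρ a = c.B ρ b + ∑ x ∈ d.S, dd x * c.B ρ x := by
        have := congrArg (fun v => c.B ρ v) haeq
        simpa [map_add, map_smul, c.B_apply_sum, smul_eq_mul] using this
      have hsingle : dd a * c.B ρ a ≤ ∑ x ∈ d.S, dd x * c.B ρ x := by
        apply Finset.single_le_sum (f := fun x => dd x * c.B ρ x) _ ha
        intro x hx
        show 0 ≤ dd x * c.B ρ x
        have h5 : 0 ≤ c.B ρ x := by rw [c.Bsymm]; exact le_of_lt (d.S_Bρ hx)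
        exact mul_nonneg (hdd x) h5
      have hBρb : 0 < c.B ρ b := by rw [c.Bsymm ρ b]; exact d.S_Bρ hb
      have hBρa : 0 < c.B ρ a := by rw [c.Bsymm ρ a]; exact d.S_Bρ ha
      nlinarith

/-- The simple system is linearly independent. -/
lemma indep (hρ : ∀ α ∈ c.Δ, c.B α ρ ≠ 0) (F : E → ℝ)
    (hF : ∑ x ∈ d.S, F x • x = 0) : ∀ x ∈ d.S, F x = 0 := by
  classical
  set P := d.S.filter (fun x => 0 < F x) with hP
  set N := d.S.filter (fun x => ¬ 0 < F x) with hN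
  have hsplit : ∑ x ∈ P, F x • x + ∑ x ∈ N, F x • x = 0 := by
    rw [Finset.sum_filter_add_sum_filter_not]
    exact hF
  have hu2 : ∑ x ∈ P, F x • x = ∑ x ∈ N, (-(F x)) • x := by
    simp_rw [neg_smul]
    rw [Finset.sum_neg_distrib]
    linear_combination (norm := module) hsplit
  have hBuu : c.B (∑ x ∈ P, F x • x) (∑ x ∈ P, F x • x) ≤ 0 := by
    nth_rewrite 2 [hu2]
    rw [c.B_sum_apply]
    apply Finset.sum_nonpos
    intro p hp
    rw [c.B_apply_sum]
    apply mul_nonpos_of_nonneg_of_nonpos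
    · exact le_of_lt (Finset.mem_filter.1 hp).2
    · apply Finset.sum_nonpos
      intro n hn
      have hpn : p ≠ n := by
        intro h
        exact (Finset.mem_filter.1 hn).2 (h ▸ (Finset.mem_filter.1 hp).2)
      apply mul_nonpos_of_nonneg_of_nonpos
      · have := (Finset.mem_filter.1 hn).2
        push_neg at this
        linarith
      · exact d.obtuse hρ (Finset.mem_filter.1 hp).1 (Finset.mem_filter.1 hn).1 hpn
  have hu0 : ∑ x ∈ P, F x • x = 0 := by
    by_contra h
    exact absurd hBuu (not_le.2 (c.Bpos _ h))
  -- now both sums vanish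
  have hPzero : ∀ x ∈ P, F x * c.B x ρ = 0 := by
    have h0 : ∑ x ∈ P, F x * c.B x ρ = 0 := by
      have := congrArg (fun v => c.B v ρ) hu0
      simpa [c.B_sum_apply] using this
    intro x hx
    have hzero := (Finset.sum_eq_zero_iff_of_nonneg ?_).1 h0 x hx
    · exact hzero
    · intro y hy
      exact mul_nonneg (le_of_lt (Finset.mem_filter.1 hy).2)
        (le_of_lt (d.S_Bρ (Finset.mem_filter.1 hy).1))
  have hNzero : ∀ x ∈ N, (-(F x)) * c.B x ρ = 0 := by
    have h0 : ∑ x ∈ N, (-(F x)) * c.B x ρ = 0 := by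
      have h00 : (0:E) = ∑ x ∈ N, (-(F x)) • x := by rw [← hu2, hu0]
      have := congrArg (fun v => c.B v ρ) h00
      simpa [c.B_sum_apply] using this.symm
    intro x hx
    have hmem := Finset.mem_filter.1 hx
    have hge : 0 ≤ -(F x) := by push_neg at hmem; linarith [hmem.2]
    exact (Finset.sum_eq_zero_iff_of_nonneg (fun y hy => by
      have hmy := Finset.mem_filter.1 hy
      have : 0 ≤ -(F y) := by push_neg at hmy; linarith [hmy.2]
      exact mul_nonneg this (le_of_lt (d.S_Bρ hmy.1)))).1 h0 x hx
  intro x hx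
  by_cases hc : 0 < F x
  · have hxP : x ∈ P := Finset.mem_filter.2 ⟨hx, hc⟩
    have := hPzero x hxP
    rcases mul_eq_zero.1 this with h | h
    · exact h
    · exact absurd h (ne_of_gt (d.S_Bρ hx))
  · have hxN : x ∈ N := Finset.mem_filter.2 ⟨hx, hc⟩
    have := hNzero x hxN
    rcases mul_eq_zero.1 this with h | h
    · linarith
    · exact absurd h (ne_of_gt (d.S_Bρ hx))

end SS

namespace RC

variable {E : Type*} [AddCommGroup E] [Module ℝ E] (c : RC E)

lemma refl_smul {α : E} (hα : α ∈ c.Δ) {k : ℝ} (hk : k ≠ 0) (hkα : k • α ∈ c.Δ) :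
    c.refl (k • α) = c.refl α := by
  apply c.ext_on_Δ
  intro β hβ
  rw [c.hrefl _ hkα β, c.hrefl _ hα β]
  have h1 : c.B (k • α) β = k * c.B α β := by simp [smul_eq_mul]
  have h2 : c.B (k • α) (k • α) = k * (k * c.B α α) := by simp [smul_eq_mul]
  have hBαα := c.Bne α hα
  have hcoef : 2 * (k * c.B α β) / (k * (k * c.B α α)) * k = 2 * c.B α β / c.B α α := by
    field_simp
  rw [h1, h2, smul_smul, hcoef]

end RC

namespace SS

variable {E : Type*} [AddCommGroup E] [Module ℝ E] [DecidableEq E] {c : RC E} {ρ : E}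
  (d : SS c ρ)

/-- Simple reflections permute the positive roots other than multiples of the
corresponding simple root. -/
lemma perm (hρ : ∀ α ∈ c.Δ, c.B α ρ ≠ 0) {γ β : E} (hγ : γ ∈ d.S) (hβ : β ∈ c.Pos ρ)
    (hnp : ∀ t : ℝ, β ≠ t • γ) : c.refl γ β ∈ c.Pos ρ := by
  have hγΔ : γ ∈ c.Δ := d.S_Δ hγ
  have hβΔ : β ∈ c.Δ := hβ.1
  have hσΔ : c.refl γ β ∈ c.Δ := c.hreflΔ γ hγΔ β hβΔ
  set t : ℝ := 2 * c.B γ β / c.B γ γ with hts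
  have hσ : c.refl γ β = β - t • γ := c.hrefl γ hγΔ β
  rcases c.pos_or_neg _ hρ hσΔ with hcase | hcase
  · exact hcase
  obtain ⟨e, he, heq⟩ := d.gen _ hcase
  obtain ⟨dd, hdd, hde⟩ := d.gen β hβ
  have ha₀ : ∃ a₀ ∈ d.S, a₀ ≠ γ ∧ 0 < dd a₀ := by
    by_contra h
    push_neg at h
    have hβγ : β = dd γ • γ := by
      rw [hde, Finset.sum_eq_single γ]
      · intro b hbS hbγ
        have := h b hbS hbγ
        have h0 : dd b = 0 := le_antisymm this (hdd b)
        rw [h0, zero_smul]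
      · intro hγS; exact absurd hγ hγS
    exact hnp (dd γ) hβγ
  obtain ⟨a₀, ha₀S, ha₀γ, ha₀pos⟩ := ha₀
  have h2 : ∑ x ∈ d.S, e x • x = t • γ - β := by
    rw [← heq, hσ]; module
  have h1 : ∑ x ∈ d.S, (if x = γ then t else 0) • x = t • γ := by
    rw [Finset.sum_eq_single γ]
    · simp
    · intro b _ hbγ; simp [hbγ]
    · intro hγS; exact absurd hγ hγS
  have hFsum : ∑ x ∈ d.S, (fun x => dd x + e x - (if x = γ then t else 0)) x • x = 0 := by
    simp_rw [sub_smul, add_smul]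
    rw [Finset.sum_sub_distrib, Finset.sum_add_distrib, h1, ← hde, h2]
    module
  have hF := d.indep hρ _ hFsum a₀ ha₀S
  simp only [if_neg ha₀γ, sub_zero] at hF
  have := he a₀
  linarith

/-- The subgroup generated by the simple reflections. -/
def WS : Subgroup (E ≃ₗ[ℝ] E) :=
  Subgroup.closure {w : E ≃ₗ[ℝ] E | ∃ γ ∈ d.S, w = c.refl γ}

lemma WS_le_W : d.WS ≤ c.W := by
  apply Subgroup.closure_le _ |>.2
  rintro w ⟨γ, hγ, rfl⟩
  exact c.refl_mem_W (d.S_Δ hγ)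

lemma refl_mem_WS_aux (hρ : ∀ α ∈ c.Δ, c.B α ρ ≠ 0) :
    ∀ n : ℕ, ∀ β ∈ c.Pos ρ,
      ((c.PosF ρ).filter (fun x => c.B x ρ < c.B β ρ)).card ≤ n → c.refl β ∈ d.WS := by
  intro n
  induction n using Nat.strong_induction_on with
  | _ n ih =>
    intro β hβ hcard
    have hβΔ : β ∈ c.Δ := hβ.1
    have hβ0 : β ≠ 0 := c.ane β hβΔ
    obtain ⟨dd, hdd, hde⟩ := d.gen β hβ
    have hBββ : 0 < c.B β β := c.Bpos β hβ0
    have hsum : c.B β β = ∑ x ∈ d.S, dd x * c.B β x := by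
      conv_lhs => rw [show c.B β β = c.B β (∑ x ∈ d.S, dd x • x) by rw [← hde]]
      exact c.B_apply_sum β d.S dd
    have hγ : ∃ γ ∈ d.S, 0 < dd γ * c.B β γ := by
      by_contra h
      push_neg at h
      have : ∑ x ∈ d.S, dd x * c.B β x ≤ 0 := Finset.sum_nonpos h
      linarith
    obtain ⟨γ, hγS, hγpos⟩ := hγ
    have hγΔ : γ ∈ c.Δ := d.S_Δ hγS
    have hBβγ : 0 < c.B β γ := by
      rcases (mul_pos_iff.1 hγpos) with ⟨_, h⟩ | ⟨h1, _⟩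
      · exact h
      · exact absurd h1 (not_lt.2 (hdd γ))
    by_cases hcase : ∃ s : ℝ, β = s • γ
    · obtain ⟨s, rfl⟩ := hcase
      have hs : s ≠ 0 := by rintro rfl; simp at hβ0
      rw [c.refl_smul hγΔ hs hβΔ]
      exact Subgroup.subset_closure ⟨γ, hγS, rfl⟩
    · push_neg at hcase
      have hσpos : c.refl γ β ∈ c.Pos ρ := d.perm hρ hγS hβ hcase
      set t : ℝ := 2 * c.B γ β / c.B γ γ with hts
      have ht : 0 < t := by
        apply div_pos _ (c.Bpos γ (c.ane γ hγΔ))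
        rw [c.Bsymm γ β]; linarith
      have hσρ : c.B (c.refl γ β) ρ < c.B β ρ := by
        rw [c.hrefl γ hγΔ β]
        rw [map_sub, LinearMap.sub_apply]
        have : c.B (t • γ) ρ = t * c.B γ ρ := by simp [smul_eq_mul]
        rw [this]
        have := d.S_Bρ hγS
        nlinarith
      have hssub : (c.PosF ρ).filter (fun x => c.B x ρ < c.B (c.refl γ β) ρ) ⊂
          (c.PosF ρ).filter (fun x => c.B x ρ < c.B β ρ) := by
        apply Finset.ssubset_iff_of_subset _ |>.2
        · exact ⟨c.refl γ β, Finset.mem_filter.2 ⟨(c.mem_PosF ρ).2 hσpos, hσρ⟩,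
            fun hmem => absurd (Finset.mem_filter.1 hmem).2 (lt_irrefl _)⟩
        · intro x hx
          rw [Finset.mem_filter] at *
          exact ⟨hx.1, by linarith [hx.2]⟩
      have hlt : ((c.PosF ρ).filter (fun x => c.B x ρ < c.B (c.refl γ β) ρ)).card < n := by
        calc _ < ((c.PosF ρ).filter (fun x => c.B x ρ < c.B β ρ)).card :=
              Finset.card_lt_card hssub
        _ ≤ n := hcard
      have hσWS : c.refl (c.refl γ β) ∈ d.WS := ih _ hlt _ hσpos (le_refl _)
      have hconj := c.conj_refl (c.refl_mem_stabΔ γ hγΔ) hσpos.1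
      rw [c.refl_refl γ hγΔ β] at hconj
      rw [← hconj]
      have hγWS : c.refl γ ∈ d.WS := Subgroup.subset_closure ⟨γ, hγS, rfl⟩
      exact Subgroup.mul_mem _ (Subgroup.mul_mem _ hγWS hσWS) (Subgroup.inv_mem _ hγWS)

lemma W_le_WS (hρ : ∀ α ∈ c.Δ, c.B α ρ ≠ 0) : c.W ≤ d.WS := by
  apply Subgroup.closure_le _ |>.2
  rintro w ⟨α, hα, rfl⟩
  rcases c.pos_or_neg _ hρ hα with h | h
  · exact d.refl_mem_WS_aux hρ _ α h (le_refl _)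
  · have hneg : -α = (-1 : ℝ) • α := by module
    have h1 : c.refl ((-1 : ℝ) • α) = c.refl α := c.refl_smul hα (by norm_num) (hneg ▸ h.1)
    rw [← h1, ← hneg]
    exact d.refl_mem_WS_aux hρ _ (-α) h (le_refl _)

end SS

namespace SS

variable {E : Type*} [AddCommGroup E] [Module ℝ E] [DecidableEq E] {c : RC E} {ρ : E}
  (d : SS c ρ)

/-- `L` is a word for `w` in the simple reflections. -/
def isWord (w : E ≃ₗ[ℝ] E) (L : List E) : Prop :=
  (∀ γ ∈ L, γ ∈ d.S) ∧ w = (L.map c.refl).prod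

lemma word_mem_W {w : E ≃ₗ[ℝ] E} {L : List E} (h : d.isWord w L) : w ∈ c.W := by
  obtain ⟨hmem, rfl⟩ := h
  induction L with
  | nil => exact Subgroup.one_mem _
  | cons γ L ih =>
    rw [List.map_cons, List.prod_cons]
    exact Subgroup.mul_mem _ (c.refl_mem_W (d.S_Δ (hmem γ (List.mem_cons_self))))
      (ih (fun x hx => hmem x (List.mem_cons_of_mem _ hx)))

lemma prod_reverse_refl (L : List E) (hL : ∀ γ ∈ L, γ ∈ d.S) :
    ((L.reverse.map c.refl).prod) = ((L.map c.refl).prod)⁻¹ := by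
  induction L with
  | nil => simp
  | cons γ L ih =>
    simp only [List.reverse_cons, List.map_append, List.prod_append, List.map_cons,
      List.map_nil, List.prod_cons, List.prod_nil, mul_one, mul_inv_rev]
    rw [ih (fun x hx => hL x (List.mem_cons_of_mem _ hx)),
      c.refl_inv γ (d.S_Δ (hL γ (List.mem_cons_self)))]

lemma exists_word (hρ : ∀ α ∈ c.Δ, c.B α ρ ≠ 0) {w : E ≃ₗ[ℝ] E} (hw : w ∈ c.W) :
    ∃ L, d.isWord w L := by
  have hw' : w ∈ d.WS := d.W_le_WS hρ hw
  clear hw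
  induction hw' using Subgroup.closure_induction with
  | mem w hmem =>
    obtain ⟨γ, hγ, rfl⟩ := hmem
    exact ⟨[γ], fun x hx => by rw [List.mem_singleton] at hx; exact hx ▸ hγ, by simp⟩
  | one => exact ⟨[], by simp, by simp⟩
  | mul a b _ _ ha hb =>
    obtain ⟨L₁, hL₁, rfl⟩ := ha
    obtain ⟨L₂, hL₂, rfl⟩ := hb
    exact ⟨L₁ ++ L₂, fun x hx => by
      rcases List.mem_append.1 hx with h | h
      · exact hL₁ x h
      · exact hL₂ x h, by rw [List.map_append, List.prod_append]⟩
  | inv a _ ha =>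
    obtain ⟨L, hL, rfl⟩ := ha
    refine ⟨L.reverse, fun x hx => hL x (List.mem_reverse.1 hx), ?_⟩
    rw [d.prod_reverse_refl L hL]

/-- Key length-decreasing lemma (the "strong exchange lite"). -/
lemma shrink (hρ : ∀ α ∈ c.Δ, c.B α ρ ≠ 0) :
    ∀ n : ℕ, ∀ w : E ≃ₗ[ℝ] E, ∀ L : List E, d.isWord w L → L.length ≤ n →
      ∀ γ ∈ d.S, c.B (w γ) ρ < 0 →
      ∃ L', d.isWord (w * c.refl γ) L' ∧ L'.length < n := by
  intro n
  induction n using Nat.strong_induction_on with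
  | _ n ih =>
    intro w L hword hlen γ hγ hneg
    have hγΔ : γ ∈ c.Δ := d.S_Δ hγ
    match L, hword with
    | [], ⟨hmem, hw⟩ =>
      exfalso
      simp only [List.map_nil, List.prod_nil] at hw
      subst hw
      have : c.B γ ρ > 0 := d.S_Bρ hγ
      rw [show ((1 : E ≃ₗ[ℝ] E)) γ = γ from rfl] at hneg
      linarith
    | δ :: L₁, ⟨hmem, hw⟩ =>
      have hδS : δ ∈ d.S := hmem δ (List.mem_cons_self)
      have hδΔ : δ ∈ c.Δ := d.S_Δ hδS
      set u : E ≃ₗ[ℝ] E := (L₁.map c.refl).prod with hu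
      have hword₁ : d.isWord u L₁ := ⟨fun x hx => hmem x (List.mem_cons_of_mem _ hx), rfl⟩
      have huW : u ∈ c.W := d.word_mem_W hword₁
      have hwu : w = c.refl δ * u := by
        rw [hw, List.map_cons, List.prod_cons]
      match n, hlen with
      | 0, hlen => exact absurd hlen (by simp)
      | m + 1, hlen =>
        have hL₁len : L₁.length ≤ m := by
          simpa using hlen
        have huγΔ : u γ ∈ c.Δ := c.W_maps huW hγΔ
        have hwγ : w γ = c.refl δ (u γ) := by rw [hwu]; rfl
        rcases lt_trichotomy (c.B (u γ) ρ) 0 with hc | hc | hc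
        · obtain ⟨L₂, hword₂, hlen₂⟩ := ih m (by omega) u L₁ hword₁ hL₁len γ hγ hc
          refine ⟨δ :: L₂, ⟨?_, ?_⟩, ?_⟩
          · intro x hx
            rcases List.mem_cons.1 hx with h | h
            · exact h ▸ hδS
            · exact hword₂.1 x h
          · rw [List.map_cons, List.prod_cons, ← hword₂.2, hwu, mul_assoc]
          · simpa using hlen₂
        · exact absurd hc (hρ _ huγΔ)
        · -- u γ positive, refl δ (u γ) negative ⟹ u γ = t • δ
          have huγpos : u γ ∈ c.Pos ρ := ⟨huγΔ, hc⟩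
          have hnσ : ¬ (c.refl δ (u γ) ∈ c.Pos ρ) := by
            intro hmem'
            rw [← hwγ] at hmem'
            linarith [hmem'.2]
          have hex : ∃ t : ℝ, u γ = t • δ := by
            by_contra h
            push_neg at h
            exact hnσ (d.perm hρ hδS huγpos h)
          obtain ⟨t, htδ⟩ := hex
          have ht0 : t ≠ 0 := by
            rintro rfl
            rw [zero_smul] at htδ
            exact c.ane _ huγΔ htδ
          have hreflδ : c.refl (u γ) = c.refl δ := by
            rw [htδ]
            exact c.refl_smul hδΔ ht0 (htδ ▸ huγΔ)
          have hconj := c.conj_refl (c.W_le_stabΔ huW) hγΔ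
          rw [hreflδ] at hconj
          -- u * refl γ * u⁻¹ = refl δ  ⟹  w * refl γ = u
          have hkey : w * c.refl γ = u := by
            rw [hwu]
            have h1 : u * c.refl γ = c.refl δ * u := by
              rw [← hconj]; group
            rw [mul_assoc, h1, ← mul_assoc]
            rw [c.refl_mul_refl δ hδΔ, one_mul]
          exact ⟨L₁, hkey ▸ hword₁, by omega⟩

/-- Uniqueness of the representative in the closed fundamental domain. -/
lemma chamber_uniq_aux (hρ : ∀ α ∈ c.Δ, c.B α ρ ≠ 0) :
    ∀ n : ℕ, ∀ w : E ≃ₗ[ℝ] E, ∀ L : List E, d.isWord w L → L.length ≤ n →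
      ∀ x y : E, (∀ β ∈ c.Pos ρ, 0 ≤ c.B β x) → (∀ β ∈ c.Pos ρ, 0 ≤ c.B β y) →
      w x = y → x = y := by
  intro n
  induction n using Nat.strong_induction_on with
  | _ n ih =>
    intro w L hword hlen x y hx hy hwxy
    rcases List.eq_nil_or_concat L with rfl | ⟨L₁, γ, rfl⟩
    · obtain ⟨_, hw⟩ := hword
      simp only [List.map_nil, List.prod_nil] at hw
      subst hw
      exact hwxy
    · obtain ⟨hmem, hw⟩ := hword
      have hγS : γ ∈ d.S := hmem γ (by simp)
      have hγΔ : γ ∈ c.Δ := d.S_Δ hγS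
      have hγpos : γ ∈ c.Pos ρ := d.S_pos hγS
      set u : E ≃ₗ[ℝ] E := (L₁.map c.refl).prod with hu
      have hword₁ : d.isWord u L₁ := ⟨fun z hz => hmem z (by simp [hz]), rfl⟩
      have hwu : w = u * c.refl γ := by
        rw [hw]
        rw [List.concat_eq_append, List.map_append, List.prod_append]
        simp [hu]
      have hwW : w ∈ c.W := d.word_mem_W ⟨hmem, hw⟩
      have hwγΔ : w γ ∈ c.Δ := c.W_maps hwW hγΔ
      match n, hlen with
      | 0, hlen => exact absurd hlen (by simp)
      | m + 1, hlen =>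
        have hL₁len : L₁.length ≤ m := by
          have := List.length_concat (as := L₁) (a := γ)
          omega
        rcases lt_trichotomy (c.B (w γ) ρ) 0 with hc | hc | hc
        · -- w γ negative: wall-crossing, refl γ x = x
          have hBγx : c.B γ x = 0 := by
            have h1 : 0 ≤ c.B γ x := hx γ hγpos
            have h2 : c.B γ x = c.B (w γ) (w x) := (c.B_W hwW γ x).symm
            have h3 : -(w γ) ∈ c.Pos ρ := ⟨c.neg_mem_Δ hwγΔ, by simpa using hc⟩
            have h4 : 0 ≤ c.B (-(w γ)) y := hy _ h3
            have h5 : c.B (-(w γ)) y = -(c.B (w γ) y) := by simp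
            rw [hwxy] at h2
            linarith [h2, h4, h5 ▸ h4]
          have hrx : c.refl γ x = x := c.refl_apply_of_B_eq_zero γ hγΔ x hBγx
          have hux : u x = y := by
            have : (u * c.refl γ) x = u (c.refl γ x) := rfl
            rw [← hwu] at this
            rw [← hwxy, this, hrx]
          exact ih m (by omega) u L₁ hword₁ hL₁len x y hx hy hux
        · exact absurd hc (hρ _ hwγΔ)
        · -- w γ positive: shorten the word for w
          have huW : u ∈ c.W := d.word_mem_W hword₁
          have huγ : c.B (u γ) ρ < 0 := by
            have h1 : u γ = -(w γ) := by
              rw [hwu]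
              have : (u * c.refl γ) γ = u (c.refl γ γ) := rfl
              rw [this, c.refl_apply_self γ hγΔ]
              simp
            rw [show u γ = -(w γ) from h1]
            simpa using hc
          obtain ⟨L₂, hword₂, hlen₂⟩ := d.shrink hρ m u L₁ hword₁ hL₁len γ hγS huγ
          have hw2 : u * c.refl γ = w := hwu.symm
          rw [hw2] at hword₂
          exact ih m (by omega) w L₂ hword₂ (by omega) x y hx hy hwxy
end SS

namespace RC

variable {E : Type*} [AddCommGroup E] [Module ℝ E] (c : RC E) {ρ : E}

lemma refl_smul_eq (c : RC E) {β : E} (hβ : β ∈ c.Δ) (x : E) :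
    c.refl β x = x - (2 * c.B β x / c.B β β) • β := c.hrefl β hβ x

lemma exists_dominant (hρ : ∀ α ∈ c.Δ, c.B α ρ ≠ 0) (x : E) :
    ∃ w ∈ c.W, ∀ β ∈ c.Pos ρ, 0 ≤ c.B β ((w : E ≃ₗ[ℝ] E) x) := by
  have : Nonempty c.W := ⟨1⟩
  obtain ⟨wm, hmax⟩ := Finite.exists_max (fun w : c.W => c.B ρ ((w : E ≃ₗ[ℝ] E) x))
  refine ⟨wm, wm.2, ?_⟩
  intro β hβ
  by_contra hneg
  push_neg at hneg
  have hβΔ : β ∈ c.Δ := hβ.1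
  set w' : c.W := ⟨c.refl β * wm, Subgroup.mul_mem _ (c.refl_mem_W hβΔ) wm.2⟩ with hw'
  have happ : (w' : E ≃ₗ[ℝ] E) x = c.refl β ((wm : E ≃ₗ[ℝ] E) x) := rfl
  have hval : c.B ρ ((w' : E ≃ₗ[ℝ] E) x)
      = c.B ρ ((wm : E ≃ₗ[ℝ] E) x)
        - (2 * c.B β ((wm : E ≃ₗ[ℝ] E) x) / c.B β β) * c.B ρ β := by
    rw [happ, c.refl_smul_eq hβΔ, map_sub, map_smul, smul_eq_mul]
  have ht : 2 * c.B β ((wm : E ≃ₗ[ℝ] E) x) / c.B β β < 0 := by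
    apply div_neg_of_neg_of_pos (by linarith) (c.Bpos β (c.ane β hβΔ))
  have hρβ : 0 < c.B ρ β := by rw [c.Bsymm]; exact hβ.2
  have : c.B ρ ((wm : E ≃ₗ[ℝ] E) x) < c.B ρ ((w' : E ≃ₗ[ℝ] E) x) := by
    rw [hval]; nlinarith
  exact absurd (hmax w') (not_le.2 this)

lemma exists_dominant_pair (hρ : ∀ α ∈ c.Δ, c.B α ρ ≠ 0) (a b : E) :
    ∃ w ∈ c.W, (∀ β ∈ c.Pos ρ, 0 ≤ c.B β ((w : E ≃ₗ[ℝ] E) a)) ∧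
      (∀ β ∈ c.Pos ρ, c.B β ((w : E ≃ₗ[ℝ] E) a) = 0 → 0 ≤ c.B β ((w : E ≃ₗ[ℝ] E) b)) := by
  obtain ⟨w₁, hw₁W, hdom⟩ := c.exists_dominant hρ a
  have hne : Nonempty {w : c.W // (w : E ≃ₗ[ℝ] E) ((w₁ : E ≃ₗ[ℝ] E) a) = (w₁ : E ≃ₗ[ℝ] E) a} :=
    ⟨⟨1, rfl⟩⟩
  obtain ⟨wm, hmax⟩ := Finite.exists_max
    (fun w : {w : c.W // (w : E ≃ₗ[ℝ] E) ((w₁ : E ≃ₗ[ℝ] E) a) = (w₁ : E ≃ₗ[ℝ] E) a} =>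
      c.B ρ (((w : c.W) : E ≃ₗ[ℝ] E) ((w₁ : E ≃ₗ[ℝ] E) b)))
  set w₂ : c.W := (wm : c.W) with hw₂
  have hw₂fix : (w₂ : E ≃ₗ[ℝ] E) ((w₁ : E ≃ₗ[ℝ] E) a) = (w₁ : E ≃ₗ[ℝ] E) a := wm.2
  refine ⟨(w₂ : E ≃ₗ[ℝ] E) * w₁, Subgroup.mul_mem _ w₂.2 hw₁W, ?_, ?_⟩
  · intro β hβ
    have happ : ((w₂ : E ≃ₗ[ℝ] E) * w₁) a = (w₂ : E ≃ₗ[ℝ] E) ((w₁ : E ≃ₗ[ℝ] E) a) := rfl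
    rw [happ, hw₂fix]
    exact hdom β hβ
  · intro β hβ hzero
    by_contra hneg
    push_neg at hneg
    have hβΔ : β ∈ c.Δ := hβ.1
    have happa : ((w₂ : E ≃ₗ[ℝ] E) * w₁) a = (w₁ : E ≃ₗ[ℝ] E) a := hw₂fix
    rw [happa] at hzero
    have happb : ((w₂ : E ≃ₗ[ℝ] E) * w₁) b = (w₂ : E ≃ₗ[ℝ] E) ((w₁ : E ≃ₗ[ℝ] E) b) := rfl
    rw [happb] at hneg
    -- the improved element
    have hmem' : ((c.refl β * (w₂ : E ≃ₗ[ℝ] E) : E ≃ₗ[ℝ] E)) ∈ c.W :=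
      Subgroup.mul_mem _ (c.refl_mem_W hβΔ) w₂.2
    have hfix' : ((c.refl β * (w₂ : E ≃ₗ[ℝ] E) : E ≃ₗ[ℝ] E)) ((w₁ : E ≃ₗ[ℝ] E) a)
        = (w₁ : E ≃ₗ[ℝ] E) a := by
      have h1 : ((c.refl β * (w₂ : E ≃ₗ[ℝ] E) : E ≃ₗ[ℝ] E)) ((w₁ : E ≃ₗ[ℝ] E) a)
          = c.refl β ((w₂ : E ≃ₗ[ℝ] E) ((w₁ : E ≃ₗ[ℝ] E) a)) := rfl
      rw [h1, hw₂fix]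
      exact c.refl_apply_of_B_eq_zero β hβΔ _ hzero
    set w' : {w : c.W // (w : E ≃ₗ[ℝ] E) ((w₁ : E ≃ₗ[ℝ] E) a) = (w₁ : E ≃ₗ[ℝ] E) a} :=
      ⟨⟨_, hmem'⟩, hfix'⟩ with hw'
    have happ' : (((w' : c.W) : E ≃ₗ[ℝ] E)) ((w₁ : E ≃ₗ[ℝ] E) b)
        = c.refl β ((w₂ : E ≃ₗ[ℝ] E) ((w₁ : E ≃ₗ[ℝ] E) b)) := rfl
    have hval : c.B ρ (((w' : c.W) : E ≃ₗ[ℝ] E) ((w₁ : E ≃ₗ[ℝ] E) b))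
        = c.B ρ ((w₂ : E ≃ₗ[ℝ] E) ((w₁ : E ≃ₗ[ℝ] E) b))
          - (2 * c.B β ((w₂ : E ≃ₗ[ℝ] E) ((w₁ : E ≃ₗ[ℝ] E) b)) / c.B β β) * c.B ρ β := by
      rw [happ', c.refl_smul_eq hβΔ, map_sub, map_smul, smul_eq_mul]
    have ht : 2 * c.B β ((w₂ : E ≃ₗ[ℝ] E) ((w₁ : E ≃ₗ[ℝ] E) b)) / c.B β β < 0 :=
      div_neg_of_neg_of_pos (by linarith) (c.Bpos β (c.ane β hβΔ))
    have hρβ : 0 < c.B ρ β := by rw [c.Bsymm]; exact hβ.2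
    have : c.B ρ ((w₂ : E ≃ₗ[ℝ] E) ((w₁ : E ≃ₗ[ℝ] E) b))
        < c.B ρ (((w' : c.W) : E ≃ₗ[ℝ] E) ((w₁ : E ≃ₗ[ℝ] E) b)) := by
      rw [hval]; nlinarith
    exact absurd (hmax w') (not_le.2 this)

end RC

namespace SS

variable {E : Type*} [AddCommGroup E] [Module ℝ E] [DecidableEq E] {c : RC E} {ρ : E}

/-- helper: a positivity threshold for a dominant pair. -/
lemma eps_bound {β a b : E} (hβpos : β ∈ c.Pos ρ) (h1 : 0 ≤ c.B β a)
    (h2 : c.B β a = 0 → 0 ≤ c.B β b) {ε : ℝ} (hε : 0 < ε)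
    (hεle : ε ≤ (if 0 < c.B β a then c.B β a / (1 + |c.B β b|) else 1)) :
    0 ≤ c.B β (a + ε • b) := by
  have hBsum : c.B β (a + ε • b) = c.B β a + ε * c.B β b := by
    rw [map_add, map_smul, smul_eq_mul]
  rw [hBsum]
  rcases lt_or_eq_of_le h1 with hpos | heq
  · rw [if_pos hpos] at hεle
    set X := c.B β a
    set Y := c.B β b
    have hM : 0 < 1 + |Y| := by positivity
    have h3 : ε * (1 + |Y|) ≤ X := (le_div_iff₀ hM).1 hεle
    have h4 : -Y ≤ |Y| := neg_le_abs Y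
    nlinarith [mul_le_mul_of_nonneg_left h4 (le_of_lt hε)]
  · have h5 : 0 ≤ c.B β b := h2 heq.symm
    nlinarith
lemma pair_uniq (d : SS c ρ) (hρ : ∀ α ∈ c.Δ, c.B α ρ ≠ 0) {w : E ≃ₗ[ℝ] E} (hw : w ∈ c.W)
    {a b a' b' : E}
    (ha : ∀ β ∈ c.Pos ρ, 0 ≤ c.B β a) (hb : ∀ β ∈ c.Pos ρ, c.B β a = 0 → 0 ≤ c.B β b)
    (ha' : ∀ β ∈ c.Pos ρ, 0 ≤ c.B β a') (hb' : ∀ β ∈ c.Pos ρ, c.B β a' = 0 → 0 ≤ c.B β b')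
    (hwa : w a = a') (hwb : w b = b') : a = a' ∧ b = b' := by
  classical
  set g1 : E → ℝ := fun β => if 0 < c.B β a then c.B β a / (1 + |c.B β b|) else 1 with hg1
  set g2 : E → ℝ := fun β => if 0 < c.B β a' then c.B β a' / (1 + |c.B β b'|) else 1 with hg2
  set F : Finset ℝ := insert 1 (((c.PosF ρ).image g1) ∪ ((c.PosF ρ).image g2)) with hF
  have hFne : F.Nonempty := ⟨1, Finset.mem_insert_self _ _⟩
  set ε₀ : ℝ := F.min' hFne with hε₀
  have hε₀pos : 0 < ε₀ := by
    rw [hε₀, Finset.lt_min'_iff]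
    intro y hy
    rw [hF, Finset.mem_insert, Finset.mem_union] at hy
    rcases hy with rfl | hy | hy
    · norm_num
    · obtain ⟨β, hβ, rfl⟩ := Finset.mem_image.1 hy
      rw [hg1]
      dsimp only
      split
      · apply div_pos (by assumption) (by positivity)
      · norm_num
    · obtain ⟨β, hβ, rfl⟩ := Finset.mem_image.1 hy
      rw [hg2]
      dsimp only
      split
      · apply div_pos (by assumption) (by positivity)
      · norm_num
  have hkey : ∀ ε : ℝ, 0 < ε → ε ≤ ε₀ → a + ε • b = a' + ε • b' := by
    intro ε hε hεle
    obtain ⟨L, hL⟩ := d.exists_word hρ hw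
    apply d.chamber_uniq_aux hρ L.length w L hL (le_refl _)
    · intro β hβ
      apply eps_bound hβ (ha β hβ) (hb β hβ) hε
      calc ε ≤ ε₀ := hεle
      _ ≤ g1 β := Finset.min'_le _ _ (by
          rw [hF, Finset.mem_insert, Finset.mem_union]
          right; left
          exact Finset.mem_image.2 ⟨β, (c.mem_PosF ρ).2 hβ, rfl⟩)
    · intro β hβ
      apply eps_bound hβ (ha' β hβ) (hb' β hβ) hε
      calc ε ≤ ε₀ := hεle
      _ ≤ g2 β := Finset.min'_le _ _ (by
          rw [hF, Finset.mem_insert, Finset.mem_union]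
          right; right
          exact Finset.mem_image.2 ⟨β, (c.mem_PosF ρ).2 hβ, rfl⟩)
    · rw [map_add, map_smul, hwa, hwb]
  have heq1 := hkey ε₀ hε₀pos (le_refl _)
  have heq2 := hkey (ε₀ / 2) (by linarith) (by linarith)
  have hbb' : b = b' := by
    have h0 : (ε₀ / 2) • (b - b') = 0 := by
      linear_combination (norm := module) heq1 - heq2
    rcases smul_eq_zero.1 h0 with h | h
    · exact absurd h (by positivity)
    · exact sub_eq_zero.1 h
  refine ⟨?_, hbb'⟩
  rw [hbb'] at heq2
  exact add_right_cancel heq2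

end SS

section Complexify

variable {E : Type*} [AddCommGroup E] [Module ℝ E]

/-- Real part of the complexification. -/
noncomputable def cRe : ℂ ⊗[ℝ] E →ₗ[ℝ] E :=
  TensorProduct.lift (LinearMap.mk₂ ℝ (fun (z : ℂ) (x : E) => z.re • x)
    (fun z₁ z₂ x => by rw [Complex.add_re, add_smul])
    (fun r z x => by rw [Complex.smul_re, smul_eq_mul, mul_smul])
    (fun z x y => by rw [smul_add])
    (fun r z x => by rw [smul_comm]))

/-- Imaginary part of the complexification. -/
noncomputable def cIm : ℂ ⊗[ℝ] E →ₗ[ℝ] E :=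
  TensorProduct.lift (LinearMap.mk₂ ℝ (fun (z : ℂ) (x : E) => z.im • x)
    (fun z₁ z₂ x => by rw [Complex.add_im, add_smul])
    (fun r z x => by rw [Complex.smul_im, smul_eq_mul, mul_smul])
    (fun z x y => by rw [smul_add])
    (fun r z x => by rw [smul_comm]))

@[simp] lemma cRe_tmul (z : ℂ) (x : E) : cRe (z ⊗ₜ[ℝ] x) = z.re • x := rfl

@[simp] lemma cIm_tmul (z : ℂ) (x : E) : cIm (z ⊗ₜ[ℝ] x) = z.im • x := rfl

lemma cdecomp (v : ℂ ⊗[ℝ] E) :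
    (1 : ℂ) ⊗ₜ[ℝ] (cRe v) + Complex.I ⊗ₜ[ℝ] (cIm v) = v := by
  induction v with
  | zero => simp
  | tmul z x =>
    rw [cRe_tmul, cIm_tmul]
    rw [TensorProduct.tmul_smul, TensorProduct.tmul_smul]
    rw [TensorProduct.smul_tmul', TensorProduct.smul_tmul']
    rw [Complex.real_smul, Complex.real_smul, mul_one]
    rw [← TensorProduct.add_tmul]
    congr 1
    exact Complex.re_add_im z
  | add v₁ v₂ h₁ h₂ =>
    rw [map_add, map_add, TensorProduct.tmul_add, TensorProduct.tmul_add]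
    rw [show (1:ℂ) ⊗ₜ[ℝ] cRe v₁ + (1:ℂ) ⊗ₜ[ℝ] cRe v₂ +
      (Complex.I ⊗ₜ[ℝ] cIm v₁ + Complex.I ⊗ₜ[ℝ] cIm v₂) =
      ((1:ℂ) ⊗ₜ[ℝ] cRe v₁ + Complex.I ⊗ₜ[ℝ] cIm v₁) +
      ((1:ℂ) ⊗ₜ[ℝ] cRe v₂ + Complex.I ⊗ₜ[ℝ] cIm v₂) from by abel]
    rw [h₁, h₂]

lemma cRe_baseChange (f : E →ₗ[ℝ] E) (v : ℂ ⊗[ℝ] E) :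
    cRe (f.baseChange ℂ v) = f (cRe v) := by
  induction v with
  | zero => simp
  | tmul z x => rw [LinearMap.baseChange_tmul, cRe_tmul, cRe_tmul, map_smul]
  | add v₁ v₂ h₁ h₂ => rw [map_add, map_add, h₁, h₂, ← map_add, ← map_add]

lemma cIm_baseChange (f : E →ₗ[ℝ] E) (v : ℂ ⊗[ℝ] E) :
    cIm (f.baseChange ℂ v) = f (cIm v) := by
  induction v with
  | zero => simp
  | tmul z x => rw [LinearMap.baseChange_tmul, cIm_tmul, cIm_tmul, map_smul]
  | add v₁ v₂ h₁ h₂ => rw [map_add, map_add, h₁, h₂, ← map_add, ← map_add]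

lemma baseChange_eq_of_parts (f g : E →ₗ[ℝ] E) (v : ℂ ⊗[ℝ] E)
    (hre : f (cRe v) = g (cRe v)) (him : f (cIm v) = g (cIm v)) :
    f.baseChange ℂ v = g.baseChange ℂ v := by
  rw [← cdecomp v, map_add, map_add, LinearMap.baseChange_tmul, LinearMap.baseChange_tmul,
    LinearMap.baseChange_tmul, LinearMap.baseChange_tmul, hre, him]

end Complexify

section Complexify2

variable {E : Type*} [AddCommGroup E] [Module ℝ E]

lemma baseChange_fix (f : E →ₗ[ℝ] E) (V : ℂ ⊗[ℝ] E)
    (hre : f (cRe V) = cRe V) (him : f (cIm V) = cIm V) : f.baseChange ℂ V = V := by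
  have hd := cdecomp V
  calc f.baseChange ℂ V
      = f.baseChange ℂ ((1 : ℂ) ⊗ₜ[ℝ] (cRe V) + Complex.I ⊗ₜ[ℝ] (cIm V)) := by rw [hd]
  _ = (1 : ℂ) ⊗ₜ[ℝ] (f (cRe V)) + Complex.I ⊗ₜ[ℝ] (f (cIm V)) := by
      rw [map_add, LinearMap.baseChange_tmul, LinearMap.baseChange_tmul]
  _ = (1 : ℂ) ⊗ₜ[ℝ] (cRe V) + Complex.I ⊗ₜ[ℝ] (cIm V) := by rw [hre, him]
  _ = V := hd

end Complexify2

lemma realInnerSelfPos' {E : Type*} [NormedAddCommGroup E] [InnerProductSpace ℝ E]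
    {x : E} (hx : x ≠ 0) : (0:ℝ) < ⟪x, x⟫ :=
  lt_of_le_of_ne real_inner_self_nonneg (Ne.symm (inner_self_ne_zero.2 hx))

theorem weyl_chamber_H_fixed_lift
    (E : Type*) [NormedAddCommGroup E] [InnerProductSpace ℝ E] [FiniteDimensional ℝ E]
    (Δ : Set E) (hfin : Δ.Finite) (hspan : Submodule.span ℝ Δ = ⊤) (hzero : (0 : E) ∉ Δ)
    (refl : E → E ≃ₗ[ℝ] E)
    (hrefl : ∀ α ∈ Δ, ∀ x : E, refl α x = x - (2 * ⟪α, x⟫ / ⟪α, α⟫) • α)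
    (hreflΔ : ∀ α ∈ Δ, ∀ β ∈ Δ, refl α β ∈ Δ)
    (W : Subgroup (E ≃ₗ[ℝ] E))
    (hW : W = Subgroup.closure {w : E ≃ₗ[ℝ] E | ∃ α ∈ Δ, w = refl α})
    (Cplus : Set E) (x₀ : E) (hx₀ : ∀ α ∈ Δ, ⟪α, x₀⟫ ≠ 0)
    (hC : Cplus = connectedComponentIn {x : E | ∀ α ∈ Δ, ⟪α, x⟫ ≠ 0} x₀)
    (H : Subgroup (E ≃ₗ[ℝ] E)) (hHfin : Finite H)
    (hHΔ : ∀ h ∈ H, (h : E ≃ₗ[ℝ] E) '' Δ = Δ)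
    (hHC : ∀ h ∈ H, (h : E ≃ₗ[ℝ] E) '' Cplus = Cplus) :
    (∀ v : ℂ ⊗[ℝ] E,
        (∀ h ∈ H, ∃ w ∈ W,
          LinearMap.baseChange ℂ (h : E ≃ₗ[ℝ] E).toLinearMap v =
            LinearMap.baseChange ℂ (w : E ≃ₗ[ℝ] E).toLinearMap v) →
        ∃ w₀ ∈ W, ∀ h ∈ H,
          LinearMap.baseChange ℂ (h : E ≃ₗ[ℝ] E).toLinearMap
              (LinearMap.baseChange ℂ (w₀ : E ≃ₗ[ℝ] E).toLinearMap v) =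
            LinearMap.baseChange ℂ (w₀ : E ≃ₗ[ℝ] E).toLinearMap v) ∧
      ∀ u : ℂ ⊗[ℝ] E,
        {u' : ℂ ⊗[ℝ] E |
          (∀ h ∈ H, LinearMap.baseChange ℂ (h : E ≃ₗ[ℝ] E).toLinearMap u' = u') ∧
          ∃ w ∈ W, LinearMap.baseChange ℂ (w : E ≃ₗ[ℝ] E).toLinearMap u = u'}.Finite := by
  classical
  -- the original bilinear form
  set B₀ : E →ₗ[ℝ] E →ₗ[ℝ] ℝ := LinearMap.mk₂ ℝ (fun x y => ⟪x, y⟫)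
    (fun x₁ x₂ y => inner_add_left x₁ x₂ y) (fun r x y => real_inner_smul_left x y r)
    (fun x y₁ y₂ => inner_add_right x y₁ y₂) (fun r x y => real_inner_smul_right x y r)
    with hB₀def
  have hB₀app : ∀ x y : E, B₀ x y = ⟪x, y⟫ := fun x y => rfl
  set c₀ : RC E :=
    { B := B₀
      Bsymm := fun x y => real_inner_comm y x
      Bpos := fun x hx => realInnerSelfPos' hx
      Δ := Δ, hfin := hfin, hspan := hspan, hzero := hzero
      refl := refl
      hrefl := hrefl
      hreflΔ := hreflΔ } with hc₀def
  have hHstab : ∀ h ∈ H, (h : E ≃ₗ[ℝ] E) ∈ c₀.stabΔ := fun h hh => hHΔ h hh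
  letI : Fintype H := Fintype.ofFinite H
  -- averaged bilinear form
  set Bn : E →ₗ[ℝ] E →ₗ[ℝ] ℝ := LinearMap.mk₂ ℝ
    (fun x y => ∑ h : H, ⟪(h : E ≃ₗ[ℝ] E) x, (h : E ≃ₗ[ℝ] E) y⟫)
    (fun x₁ x₂ y => by
      rw [← Finset.sum_add_distrib]
      apply Finset.sum_congr rfl
      intro h _
      rw [map_add, inner_add_left])
    (fun r x y => by
      rw [smul_eq_mul, Finset.mul_sum]
      apply Finset.sum_congr rfl
      intro h _
      rw [map_smul, real_inner_smul_left])
    (fun x y₁ y₂ => by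
      rw [← Finset.sum_add_distrib]
      apply Finset.sum_congr rfl
      intro h _
      rw [map_add, inner_add_right])
    (fun r x y => by
      rw [smul_eq_mul, Finset.mul_sum]
      apply Finset.sum_congr rfl
      intro h _
      rw [map_smul, real_inner_smul_right]) with hBndef
  have hBnapp : ∀ x y : E, Bn x y = ∑ h : H, ⟪(h : E ≃ₗ[ℝ] E) x, (h : E ≃ₗ[ℝ] E) y⟫ :=
    fun x y => rfl
  have hBnsymm : ∀ x y : E, Bn x y = Bn y x := by
    intro x y
    rw [hBnapp, hBnapp]
    exact Finset.sum_congr rfl (fun h _ => real_inner_comm _ _)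
  have hNonemptyH : Nonempty H := ⟨1⟩
  have hBnpos : ∀ x : E, x ≠ 0 → 0 < Bn x x := by
    intro x hx
    rw [hBnapp]
    apply Finset.sum_pos'
    · intro h _
      exact real_inner_self_nonneg
    · refine ⟨1, Finset.mem_univ _, ?_⟩
      have h1 : ((1 : H) : E ≃ₗ[ℝ] E) x = x := rfl
      rw [h1]
      exact realInnerSelfPos' hx
  have hBnH : ∀ h ∈ H, ∀ x y : E, Bn ((h : E ≃ₗ[ℝ] E) x) ((h : E ≃ₗ[ℝ] E) y) = Bn x y := by
    intro h hh x y
    rw [hBnapp, hBnapp]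
    have := Equiv.sum_comp (Equiv.mulRight (⟨h, hh⟩ : H))
      (fun k : H => ⟪(k : E ≃ₗ[ℝ] E) x, (k : E ≃ₗ[ℝ] E) y⟫)
    rw [← this]
    apply Finset.sum_congr rfl
    intro k _
    rfl
  -- conjugation in H
  have hconjH : ∀ h ∈ H, ∀ α ∈ Δ, ∀ x : E,
      (h : E ≃ₗ[ℝ] E) (refl α x) = refl ((h : E ≃ₗ[ℝ] E) α) ((h : E ≃ₗ[ℝ] E) x) := by
    intro h hh α hα x
    have hconj := c₀.conj_refl (hHstab h hh) hα
    have h1 : ((h : E ≃ₗ[ℝ] E) * c₀.refl α * (h : E ≃ₗ[ℝ] E)⁻¹) ((h : E ≃ₗ[ℝ] E) x)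
        = (h : E ≃ₗ[ℝ] E) (c₀.refl α ((h : E ≃ₗ[ℝ] E)⁻¹ ((h : E ≃ₗ[ℝ] E) x))) := rfl
    have h2 : (h : E ≃ₗ[ℝ] E)⁻¹ ((h : E ≃ₗ[ℝ] E) x) = x :=
      (h : E ≃ₗ[ℝ] E).symm_apply_apply x
    have h3 := congrArg (fun (g : E ≃ₗ[ℝ] E) => g ((h : E ≃ₗ[ℝ] E) x)) hconj
    rw [h1, h2] at h3
    exact h3
  have hBnrefl : ∀ α ∈ Δ, ∀ x y : E, Bn (refl α x) (refl α y) = Bn x y := by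
    intro α hα x y
    rw [hBnapp, hBnapp]
    apply Finset.sum_congr rfl
    intro h _
    rw [hconjH h h.2 α hα x, hconjH h h.2 α hα y]
    have hhα : (h : E ≃ₗ[ℝ] E) α ∈ Δ := c₀.maps_of_stab (hHstab h h.2) hα
    have := c₀.B_refl _ hhα ((h : E ≃ₗ[ℝ] E) x) ((h : E ≃ₗ[ℝ] E) y)
    rw [hB₀app, hB₀app] at this
    exact this
  -- proportionality of Bn α · and ⟪α, ·⟫
  have hinner_self_pos : ∀ α ∈ Δ, (0:ℝ) < ⟪α, α⟫ := by
    intro α hα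
    exact realInnerSelfPos' (fun h => hzero (h ▸ hα))
  have hker : ∀ α ∈ Δ, ∀ x : E, ⟪α, x⟫ = 0 → Bn α x = 0 := by
    intro α hα x hx
    have h1 : refl α x = x := by
      rw [hrefl α hα x, hx]
      simp
    have h2 : refl α α = -α := by
      have := c₀.refl_apply_self α hα
      exact this
    have h3 := hBnrefl α hα α x
    rw [h1, h2] at h3
    have h4 : Bn (-α) x = -(Bn α x) := by
      rw [map_neg]
      rfl
    rw [h4] at h3
    linarith
  have hprop : ∀ α ∈ Δ, ∀ x : E, Bn α x = (Bn α α / ⟪α, α⟫) * ⟪α, x⟫ := by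
    intro α hα x
    have hαα := hinner_self_pos α hα
    set r : ℝ := ⟪α, x⟫ / ⟪α, α⟫ with hr
    have hy : ⟪α, x - r • α⟫ = 0 := by
      rw [inner_sub_right, real_inner_smul_right, hr]
      field_simp
      ring
    have h5 : Bn α x = Bn α (x - r • α) + r * Bn α α := by
      rw [map_sub, map_smul]
      simp [smul_eq_mul]
    rw [h5, hker α hα _ hy, hr]
    field_simp
    ring
  -- the new root-system context
  set c : RC E :=
    { B := Bn
      Bsymm := hBnsymm
      Bpos := hBnpos
      Δ := Δ, hfin := hfin, hspan := hspan, hzero := hzero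
      refl := refl
      hrefl := by
        intro α hα x
        rw [hrefl α hα x]
        have hαα := hinner_self_pos α hα
        have hBnαα : 0 < Bn α α := hBnpos α (fun h => hzero (h ▸ hα))
        have hc : 2 * Bn α x / Bn α α = 2 * ⟪α, x⟫ / ⟪α, α⟫ := by
          have hne1 : Bn α α ≠ 0 := ne_of_gt hBnαα
          have hne2 : ⟪α, α⟫ ≠ (0:ℝ) := ne_of_gt hαα
          rw [hprop α hα x]
          field_simp
        rw [hc]
      hreflΔ := hreflΔ } with hcdef
  have hWc : W = c.W := by rw [hW]; rfl
  -- the chamber and the regular H-fixed element ρ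
  have hx₀C : x₀ ∈ Cplus := by
    rw [hC]
    exact mem_connectedComponentIn hx₀
  have hCsub : Cplus ⊆ {x : E | ∀ α ∈ Δ, ⟪α, x⟫ ≠ 0} := by
    rw [hC]
    exact connectedComponentIn_subset _ _
  have hCconn : IsPreconnected Cplus := by
    rw [hC]
    exact (isPreconnected_connectedComponentIn)
  have hsign : ∀ α ∈ Δ, ∀ z ∈ Cplus,
      (0 < ⟪α, x₀⟫ → 0 < ⟪α, z⟫) ∧ (⟪α, x₀⟫ < 0 → ⟪α, z⟫ < 0) := by
    intro α hα z hz
    have hcont : Continuous (fun y : E => ⟪α, y⟫) := continuous_const.inner continuous_id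
    have himg : IsPreconnected ((fun y : E => ⟪α, y⟫) '' Cplus) :=
      hCconn.image _ hcont.continuousOn
    have hzmem : ⟪α, z⟫ ∈ (fun y : E => ⟪α, y⟫) '' Cplus := ⟨z, hz, rfl⟩
    have hx₀mem : ⟪α, x₀⟫ ∈ (fun y : E => ⟪α, y⟫) '' Cplus := ⟨x₀, hx₀C, rfl⟩
    constructor
    · intro hpos
      by_contra hneg
      push_neg at hneg
      rcases lt_or_eq_of_le hneg with hlt | heq
      · have h0 : (0:ℝ) ∈ Set.Icc ⟪α, z⟫ ⟪α, x₀⟫ := ⟨le_of_lt hlt, le_of_lt hpos⟩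
        have := himg.Icc_subset hzmem hx₀mem h0
        obtain ⟨y, hy, hy0⟩ := this
        exact hCsub hy α hα hy0
      · exact hCsub hz α hα heq
    · intro hneg
      by_contra hpos
      push_neg at hpos
      rcases lt_or_eq_of_le hpos with hlt | heq
      · have h0 : (0:ℝ) ∈ Set.Icc ⟪α, x₀⟫ ⟪α, z⟫ := ⟨le_of_lt hneg, le_of_lt hlt⟩
        have := himg.Icc_subset hx₀mem hzmem h0
        obtain ⟨y, hy, hy0⟩ := this
        exact hCsub hy α hα hy0
      · exact hCsub hz α hα heq.symm
  set ρ : E := ∑ h : H, (h : E ≃ₗ[ℝ] E) x₀ with hρdef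
  have hhx₀C : ∀ h : H, (h : E ≃ₗ[ℝ] E) x₀ ∈ Cplus := by
    intro h
    have := hHC h h.2
    rw [← this]
    exact ⟨x₀, hx₀C, rfl⟩
  have hρfix : ∀ h ∈ H, (h : E ≃ₗ[ℝ] E) ρ = ρ := by
    intro h hh
    rw [hρdef, map_sum]
    have := Equiv.sum_comp (Equiv.mulLeft (⟨h, hh⟩ : H))
      (fun k : H => (k : E ≃ₗ[ℝ] E) x₀)
    rw [← this]
    apply Finset.sum_congr rfl
    intro k _
    rfl
  have hinnerρ : ∀ α ∈ Δ, ⟪α, ρ⟫ ≠ 0 := by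
    intro α hα
    have hexp : ⟪α, ρ⟫ = ∑ h : H, ⟪α, (h : E ≃ₗ[ℝ] E) x₀⟫ := by
      rw [hρdef, inner_sum]
    rcases lt_or_gt_of_ne (hx₀ α hα) with hneg | hpos
    · have : ∑ h : H, ⟪α, (h : E ≃ₗ[ℝ] E) x₀⟫ < 0 := by
        apply Finset.sum_neg
        · intro h _
          exact (hsign α hα _ (hhx₀C h)).2 hneg
        · exact Finset.univ_nonempty
      rw [hexp]
      linarith
    · have : 0 < ∑ h : H, ⟪α, (h : E ≃ₗ[ℝ] E) x₀⟫ := by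
        apply Finset.sum_pos
        · intro h _
          exact (hsign α hα _ (hhx₀C h)).1 hpos
        · exact Finset.univ_nonempty
      rw [hexp]
      linarith
  have hρreg : ∀ α ∈ c.Δ, c.B α ρ ≠ 0 := by
    intro α hα
    show Bn α ρ ≠ 0
    rw [hprop α hα ρ]
    have h1 : Bn α α > 0 := hBnpos α (fun h => hzero (h ▸ hα))
    have h2 := hinner_self_pos α hα
    exact mul_ne_zero (ne_of_gt (div_pos h1 h2)) (hinnerρ α hα)
  have hstab' : ∀ h ∈ H, (h : E ≃ₗ[ℝ] E) ∈ c.stabΔ := fun h hh => hHΔ h hh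
  have hHpos : ∀ h ∈ H, ∀ β ∈ c.Pos ρ, (h : E ≃ₗ[ℝ] E) β ∈ c.Pos ρ := by
    intro h hh β hβ
    refine ⟨c.maps_of_stab (hstab' h hh) hβ.1, ?_⟩
    show (0:ℝ) < Bn (h β) ρ
    have h1 : Bn (h β) ρ = Bn (h β) (h ρ) := by rw [hρfix h hh]
    rw [h1, hBnH h hh]
    exact hβ.2
  constructor
  · -- main lifting statement
    intro v hv
    set a : E := cRe v with hadef
    set b : E := cIm v with hbdef
    have hv' : ∀ h ∈ H, ∃ w, w ∈ W ∧
        (h : E ≃ₗ[ℝ] E) a = w a ∧ (h : E ≃ₗ[ℝ] E) b = w b := by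
      intro h hh
      obtain ⟨w, hwW, heq⟩ := hv h hh
      refine ⟨w, hwW, ?_, ?_⟩
      · have := congrArg cRe heq
        rw [cRe_baseChange, cRe_baseChange] at this
        exact this
      · have := congrArg cIm heq
        rw [cIm_baseChange, cIm_baseChange] at this
        exact this
    obtain ⟨w₀, hw₀W, hdom1, hdom2⟩ := c.exists_dominant_pair hρreg a b
    have hw₀W' : w₀ ∈ W := by rw [hWc]; exact hw₀W
    refine ⟨w₀, hw₀W', ?_⟩
    intro h hh
    obtain ⟨wh, hwhW, hha, hhb⟩ := hv' h hh
    have hwhWc : wh ∈ c.W := by rw [← hWc]; exact hwhW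
    set hE : E ≃ₗ[ℝ] E := (h : E ≃ₗ[ℝ] E) with hEdef
    set w' : E ≃ₗ[ℝ] E := ((hE * w₀ * hE⁻¹) * wh) * w₀⁻¹ with hw'def
    have hw'W : w' ∈ c.W := by
      apply Subgroup.mul_mem
      · exact Subgroup.mul_mem _ (c.conj_mem_W (hstab' h hh) hw₀W) hwhWc
      · exact Subgroup.inv_mem _ hw₀W
    set a' : E := w₀ a with ha'def
    set b' : E := w₀ b with hb'def
    have hinv₀ : ∀ z : E, w₀⁻¹ (w₀ z) = z := fun z => w₀.symm_apply_apply z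
    have hinvE : ∀ z : E, hE⁻¹ (hE z) = z := fun z => hE.symm_apply_apply z
    have hw'a : w' a' = hE a' := by
      have h1 : w' a' = (hE * w₀ * hE⁻¹) (wh (w₀⁻¹ (w₀ a))) := rfl
      rw [h1, hinv₀, ← hha]
      have h2 : (hE * w₀ * hE⁻¹) (hE a) = hE (w₀ (hE⁻¹ (hE a))) := rfl
      rw [h2, hinvE]
    have hw'b : w' b' = hE b' := by
      have h1 : w' b' = (hE * w₀ * hE⁻¹) (wh (w₀⁻¹ (w₀ b))) := rfl
      rw [h1, hinv₀, ← hhb]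
      have h2 : (hE * w₀ * hE⁻¹) (hE b) = hE (w₀ (hE⁻¹ (hE b))) := rfl
      rw [h2, hinvE]
    -- h maps the dominant pair to a dominant pair
    have hinvH : hE⁻¹ ∈ H := by
      have := Subgroup.inv_mem H hh
      exact this
    have hBtrans : ∀ β x : E, β ∈ c.Pos ρ → c.B β (hE x) = c.B (hE⁻¹ β) x := by
      intro β x _
      have h1 : c.B (hE (hE⁻¹ β)) (hE x) = c.B (hE⁻¹ β) x := hBnH _ hh _ _
      have h2 : hE (hE⁻¹ β) = β := hE.apply_symm_apply β
      rw [h2] at h1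
      exact h1
    have hdomH1 : ∀ β ∈ c.Pos ρ, 0 ≤ c.B β (hE a') := by
      intro β hβ
      rw [hBtrans β a' hβ]
      exact hdom1 _ (hHpos _ hinvH β hβ)
    have hdomH2 : ∀ β ∈ c.Pos ρ, c.B β (hE a') = 0 → 0 ≤ c.B β (hE b') := by
      intro β hβ h0
      rw [hBtrans β a' hβ] at h0
      rw [hBtrans β b' hβ]
      exact hdom2 _ (hHpos _ hinvH β hβ) h0
    obtain ⟨d⟩ := c.exists_SS ρ
    have hpair := d.pair_uniq hρreg hw'W hdom1 hdom2 hdomH1 hdomH2 hw'a hw'b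
    -- conclude
    apply baseChange_fix
    · rw [cRe_baseChange]
      show hE (w₀ (cRe v)) = w₀ (cRe v)
      exact hpair.1.symm
    · rw [cIm_baseChange]
      show hE (w₀ (cIm v)) = w₀ (cIm v)
      exact hpair.2.symm
  · -- finiteness of fibers
    intro u
    have hWfin : Finite c.W := c.finite_W
    apply Set.Finite.subset (Set.finite_range
      (fun w : c.W => LinearMap.baseChange ℂ ((w : E ≃ₗ[ℝ] E)).toLinearMap u))
    rintro u' ⟨-, w, hwW, hwu⟩
    exact ⟨⟨w, by rw [← hWc]; exact hwW⟩, hwu⟩
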